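/- In the (2,2,2) scenario, the box P14 (defined by P14 x y a b = 1/2 if x = y and a = b, 0 if x = y and a ≠ b, and 1/4 if x ≠ y) does not belong to L_3: there do not exist a nonnegative weight w : Fin 3 → ℝ with ∑_λ w λ = 1 and nonnegative response functions f g : Fin 3 → Fin 2 → Fin 2 → ℝ with ∑_a f λ x a = 1 and ∑_b g λ y b = 1 such that P14 x y a b = ∑_λ w λ * f λ x a * g λ y b for all x, y, a, b. Hence P14 classically requires shared randomness of dimension at least 4, even though it is quantumly achievable with qubits (local dimension 2). -/
import Mathlib


open Matrix Kronecker ComplexOrder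

/-- A (2,m,v) box: a family of conditional probability distributions. -/
def IsBox (m v : ℕ) (p : Fin m → Fin m → Fin v → Fin v → ℝ) : Prop :=
  (∀ x y a b, 0 ≤ p x y a b) ∧ ∀ x y, ∑ a, ∑ b, p x y a b = 1

/-- A product box: `p x y a b = f x a * g y b` for local response functions `f`, `g`. -/
def IsProductBox (m v : ℕ) (p : Fin m → Fin m → Fin v → Fin v → ℝ) : Prop :=
  ∃ f g : Fin m → Fin v → ℝ,
    (∀ x a, 0 ≤ f x a) ∧ (∀ y b, 0 ≤ g y b) ∧
    (∀ x, ∑ a, f x a = 1) ∧ (∀ y, ∑ b, g y b = 1) ∧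
    ∀ x y a b, p x y a b = f x a * g y b

/-- Membership in `Q_d`: the box is realizable by a shared quantum state of local
dimension `d` together with local POVMs. -/
def IsQuantumBox (d m v : ℕ) (p : Fin m → Fin m → Fin v → Fin v → ℝ) : Prop :=
  ∃ (ρ : Matrix ((Fin d) × (Fin d)) ((Fin d) × (Fin d)) ℂ)
    (A B : Fin m → Fin v → Matrix (Fin d) (Fin d) ℂ),
    ρ.PosSemidef ∧ ρ.trace = 1 ∧
    (∀ x a, (A x a).PosSemidef) ∧ (∀ x, ∑ a, A x a = 1) ∧
    (∀ y b, (B y b).PosSemidef) ∧ (∀ y, ∑ b, B y b = 1) ∧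
    ∀ x y a b, (ρ * (A x a ⊗ₖ B y b)).trace = (p x y a b : ℂ)

/-- Membership in `L_N`: the box is realizable using shared classical randomness
of dimension `N`. -/
def IsLocalBox (N m v : ℕ) (p : Fin m → Fin m → Fin v → Fin v → ℝ) : Prop :=
  ∃ (w : Fin N → ℝ) (f g : Fin N → Fin m → Fin v → ℝ),
    (∀ l, 0 ≤ w l) ∧ (∑ l, w l = 1) ∧
    (∀ l x a, 0 ≤ f l x a) ∧ (∀ l y b, 0 ≤ g l y b) ∧
    (∀ l x, ∑ a, f l x a = 1) ∧ (∀ l y, ∑ b, g l y b = 1) ∧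
    ∀ x y a b, p x y a b = ∑ l, w l * f l x a * g l y b

/-- The box `P14`: perfectly correlated on equal inputs, uniformly random otherwise. -/
noncomputable def P14 : Fin 2 → Fin 2 → Fin 2 → Fin 2 → ℝ :=
  fun x y a b => if x = y then (if a = b then 1 / 2 else 0) else 1 / 4

noncomputable def rho : Matrix ((Fin 2) × (Fin 2)) ((Fin 2) × (Fin 2)) ℂ :=
  fun i j => if i.1 = i.2 ∧ j.1 = j.2 then 1/2 else 0

noncomputable def Meas : Fin 2 → Fin 2 → Matrix (Fin 2) (Fin 2) ℂ :=
  ![![!![1,0;0,0], !![0,0;0,1]], ![!![1/2,1/2;1/2,1/2], !![1/2,-1/2;-1/2,1/2]]]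

lemma rho_trace_formula (P Q : Matrix (Fin 2) (Fin 2) ℂ) :
    (rho * (P ⊗ₖ Q)).trace =
      (P 0 0 * Q 0 0 + P 0 1 * Q 0 1 + P 1 0 * Q 1 0 + P 1 1 * Q 1 1) / 2 := by
  simp [Matrix.trace, Matrix.mul_apply, rho, Matrix.kroneckerMap_apply,
    Fintype.sum_prod_type, Fin.sum_univ_two, Matrix.diag]
  ring

lemma meas_proj : ∀ x a, Meas x a = (Meas x a)ᴴ * (Meas x a) := by
  intro x a
  fin_cases x <;> fin_cases a <;>
    · ext i j
      fin_cases i <;> fin_cases j <;>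
        norm_num [Meas, Matrix.mul_apply, Fin.sum_univ_two, Matrix.conjTranspose_apply,
            map_ofNat]

/-- `P14` is not achievable with shared classical randomness of
dimension `3` (so it requires `|λ| ≥ 4` classically), even though it is quantumly
achievable with qubits. -/
theorem P14_not_in_L3_but_in_Q2 :
    (¬ ∃ (w : Fin 3 → ℝ) (f g : Fin 3 → Fin 2 → Fin 2 → ℝ),
        (∀ l, 0 ≤ w l) ∧ (∑ l, w l = 1) ∧
        (∀ l x a, 0 ≤ f l x a) ∧ (∀ l y b, 0 ≤ g l y b) ∧
        (∀ l x, ∑ a, f l x a = 1) ∧ (∀ l y, ∑ b, g l y b = 1) ∧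
        ∀ x y a b, P14 x y a b = ∑ l, w l * f l x a * g l y b) ∧
    IsQuantumBox 2 2 2 P14 := by
  constructor
  · rintro ⟨w, f, g, hw0, hw1, hf0, hg0, hf1, hg1, hp⟩
    have key : ∀ (x : Fin 2) (a b : Fin 2), a ≠ b → ∀ l, w l * f l x a * g l x b = 0 := by
      intro x a b hab l
      have hz : ∑ l, w l * f l x a * g l x b = 0 := by
        rw [← hp x x a b]; simp [P14, hab]
      exact (Finset.sum_eq_zero_iff_of_nonneg (fun i _ => by
        have := hw0 i; have := hf0 i x a; have := hg0 i x b; positivity)).mp hz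
        l (Finset.mem_univ l)
    have det : ∀ l, 0 < w l → ∀ x : Fin 2,
        (f l x 0 = 1 ∧ g l x 0 = 1 ∧ f l x 1 = 0 ∧ g l x 1 = 0) ∨
        (f l x 1 = 1 ∧ g l x 1 = 1 ∧ f l x 0 = 0 ∧ g l x 0 = 0) := by
      intro l hl x
      have hwne : w l ≠ 0 := ne_of_gt hl
      have h01 : f l x 0 * g l x 1 = 0 := by
        have h := key x 0 1 (by decide) l
        rw [mul_assoc] at h
        exact (mul_eq_zero.mp h).resolve_left hwne
      have h10 : f l x 1 * g l x 0 = 0 := by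
        have h := key x 1 0 (by decide) l
        rw [mul_assoc] at h
        exact (mul_eq_zero.mp h).resolve_left hwne
      have hfs : f l x 0 + f l x 1 = 1 := by
        have := hf1 l x; rwa [Fin.sum_univ_two] at this
      have hgs : g l x 0 + g l x 1 = 1 := by
        have := hg1 l x; rwa [Fin.sum_univ_two] at this
      by_cases hc : f l x 0 = 0
      · right
        have hf1' : f l x 1 = 1 := by linarith
        have hg0' : g l x 0 = 0 := by
          rcases mul_eq_zero.mp h10 with h | h
          · rw [hf1'] at h; linarith
          · exact h
        exact ⟨hf1', by linarith, hc, hg0'⟩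
      · left
        have hg1' : g l x 1 = 0 := (mul_eq_zero.mp h01).resolve_left hc
        have hg0' : g l x 0 = 1 := by linarith
        have hf1' : f l x 1 = 0 := by
          rcases mul_eq_zero.mp h10 with h | h
          · exact h
          · rw [hg0'] at h; linarith
        exact ⟨by linarith, hg0', hf1', hg1'⟩
    classical
    set T : Fin 3 → Fin 2 × Fin 2 := fun l =>
      (if f l 0 0 = 1 then 0 else 1, if f l 1 0 = 1 then 0 else 1) with hT
    have hnsurj : ¬ Function.Surjective T := by
      intro hs
      have := Fintype.card_le_of_surjective T hs
      simp at this
    rw [Function.Surjective] at hnsurj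
    push_neg at hnsurj
    obtain ⟨⟨a, b⟩, hab⟩ := hnsurj
    have hsum : ∑ l, w l * f l 0 a * g l 1 b = 0 := by
      apply Finset.sum_eq_zero
      intro l _
      rcases eq_or_lt_of_le (hw0 l) with h | hl
      · rw [← h]; ring
      have hne : T l ≠ (a, b) := hab l
      have hfa : f l 0 a = 0 ∨ g l 1 b = 0 := by
        have hx0 := det l hl 0
        have hx1 := det l hl 1
        by_cases ha : a = (T l).1
        · right
          have hb : b ≠ (T l).2 := by
            intro hb
            exact hne (by rw [Prod.ext_iff]; exact ⟨ha.symm, hb.symm⟩)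
          rcases hx1 with ⟨h1, h2, h3, h4⟩ | ⟨h1, h2, h3, h4⟩
          · have : (T l).2 = 0 := by simp [hT, h1]
            have : b = 1 := by
              rcases (by decide : ∀ c : Fin 2, c = 0 ∨ c = 1) b with h | h
              · exact absurd (h.trans this.symm) hb
              · exact h
            rw [this]; exact h4
          · have hf10 : f l 1 0 ≠ 1 := by rw [h3]; norm_num
            have : (T l).2 = 1 := by simp [hT, hf10]
            have : b = 0 := by
              rcases (by decide : ∀ c : Fin 2, c = 0 ∨ c = 1) b with h | h
              · exact h
              · exact absurd (h.trans this.symm) hb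
            rw [this]; exact h4
        · left
          rcases hx0 with ⟨h1, h2, h3, h4⟩ | ⟨h1, h2, h3, h4⟩
          · have : (T l).1 = 0 := by simp [hT, h1]
            have : a = 1 := by
              rcases (by decide : ∀ c : Fin 2, c = 0 ∨ c = 1) a with h | h
              · exact absurd (h.trans this.symm) ha
              · exact h
            rw [this]; exact h3
          · have hf00 : f l 0 0 ≠ 1 := by rw [h3]; norm_num
            have : (T l).1 = 1 := by simp [hT, hf00]
            have : a = 0 := by
              rcases (by decide : ∀ c : Fin 2, c = 0 ∨ c = 1) a with h | h
              · exact h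
              · exact absurd (h.trans this.symm) ha
            rw [this]; exact h3
      rcases hfa with h | h <;> rw [h] <;> ring
    have := hp 0 1 a b
    rw [hsum] at this
    simp [P14] at this
  · refine ⟨rho, Meas, Meas, ?_, ?_, ?_, ?_, ?_, ?_, ?_⟩
    · have h : rho = rhoᴴ * rho := by
        ext ⟨i1, i2⟩ ⟨j1, j2⟩
        fin_cases i1 <;> fin_cases i2 <;> fin_cases j1 <;> fin_cases j2 <;>
          norm_num [rho, Matrix.mul_apply, Fintype.sum_prod_type, Fin.sum_univ_two,
              Matrix.conjTranspose_apply, map_ofNat]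
      rw [h]; exact Matrix.posSemidef_conjTranspose_mul_self rho
    · norm_num [Matrix.trace, rho, Fintype.sum_prod_type, Fin.sum_univ_two, Matrix.diag]
    · intro x a; rw [meas_proj x a]; exact Matrix.posSemidef_conjTranspose_mul_self _
    · intro x
      fin_cases x <;>
        · ext i j
          fin_cases i <;> fin_cases j <;>
            norm_num [Meas, Fin.sum_univ_two, Matrix.one_apply]
    · intro y b; rw [meas_proj y b]; exact Matrix.posSemidef_conjTranspose_mul_self _
    · intro y
      fin_cases y <;>
        · ext i j
          fin_cases i <;> fin_cases j <;>
            norm_num [Meas, Fin.sum_univ_two, Matrix.one_apply]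
    · intro x y a b
      fin_cases x <;> fin_cases y <;> fin_cases a <;> fin_cases b <;>
        · rw [rho_trace_formula]
          norm_num [Meas, P14]
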